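/- Let d ≥ 1, p > 0 and let μ be a probability measure supported in (−1,1]^d, with μ_N the empirical measure of an i.i.d. N-sample from μ. Then there exist positive constants C, c depending only on p, d such that for all N ≥ 1 and all x > 0: P(D_p(μ_N,μ) ≥ x) ≤ 1_{x≤1}·C exp(−cNx²) if p > d/2; ≤ 1_{x≤1}·C exp(−cN(x/log(2+1/x))²) if p = d/2; and ≤ 1_{x≤1}·C exp(−cNx^{d/p}) if p ∈ (0, d/2). -/

import Mathlib

open MeasureTheory ProbabilityTheory Real Set ENNReal NNReal

noncomputable section

/-- `T_p(μ,ν)`: infimum over couplings of `∫ |x-y|^p`. -/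
def Tcost (d : ℕ) (p : ℝ) (μ ν : Measure (EuclideanSpace ℝ (Fin d))) : ℝ :=
  sInf { r : ℝ | ∃ ξ : Measure (EuclideanSpace ℝ (Fin d) × EuclideanSpace ℝ (Fin d)),
    ξ.fst = μ ∧ ξ.snd = ν ∧ r = ∫ z, ‖z.1 - z.2‖ ^ p ∂ξ }

/-- empirical measure of the points `X 0, ..., X (N-1)`. -/
def empMeas (d N : ℕ) (X : ℕ → EuclideanSpace ℝ (Fin d)) : Measure (EuclideanSpace ℝ (Fin d)) :=
  ((N : ℝ≥0∞))⁻¹ • ∑ k ∈ Finset.range N, Measure.dirac (X k)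

/-- the cube of the partition `P_ℓ` of `(-1,1]^d` indexed by `k`. -/
def cube (d ℓ : ℕ) (k : Fin d → Fin (2 ^ ℓ)) : Set (EuclideanSpace ℝ (Fin d)) :=
  {x | ∀ i, x i ∈ Set.Ioc (-1 + (k i : ℝ) * 2 ^ (1 - (ℓ : ℤ)))
    (-1 + ((k i : ℝ) + 1) * 2 ^ (1 - (ℓ : ℤ)))}

/-- `D_p` for measures on `(-1,1]^d`. -/
def DpCpt (d : ℕ) (p : ℝ) (μ ν : Measure (EuclideanSpace ℝ (Fin d))) : ℝ :=
  (2 ^ p - 1) / 2 * ∑' ℓ : ℕ, 2 ^ (-(p * ((ℓ : ℝ) + 1))) *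
    ∑ k : Fin d → Fin (2 ^ (ℓ + 1)),
      |(μ (cube d (ℓ + 1) k)).toReal - (ν (cube d (ℓ + 1) k)).toReal|

/-- the annuli `B_n`. -/
def Bset (d n : ℕ) : Set (EuclideanSpace ℝ (Fin d)) :=
  if n = 0 then {x | ∀ i, x i ∈ Set.Ioc (-1 : ℝ) 1}
  else {x | ∀ i, x i ∈ Set.Ioc (-(2 : ℝ) ^ n) ((2 : ℝ) ^ n)} \
    {x | ∀ i, x i ∈ Set.Ioc (-(2 : ℝ) ^ (n - 1)) ((2 : ℝ) ^ (n - 1))}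

/-- `R_{B_n} μ`: image of `μ|_{B_n}/μ(B_n)` by `x ↦ x/2^n`. -/
def Rres (d n : ℕ) (μ : Measure (EuclideanSpace ℝ (Fin d))) :
    Measure (EuclideanSpace ℝ (Fin d)) :=
  Measure.map (fun x => ((2 : ℝ) ^ n)⁻¹ • x) ((μ (Bset d n))⁻¹ • μ.restrict (Bset d n))

/-- `D_p` for measures on `ℝ^d`. -/
def Dp (d : ℕ) (p : ℝ) (μ ν : Measure (EuclideanSpace ℝ (Fin d))) : ℝ :=
  ∑' n : ℕ, 2 ^ (p * n) *
    (|(μ (Bset d n)).toReal - (ν (Bset d n)).toReal| +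
      min (μ (Bset d n)).toReal (ν (Bset d n)).toReal *
        DpCpt d p (Rres d n μ) (Rres d n ν))

/-- `f(x) = (1+x)log(1+x) - x`. -/
def fBen (x : ℝ) : ℝ := (1 + x) * Real.log (1 + x) - x

/-- `g(x) = (x log x - x + 1) 1_{x ≥ 1}`. -/
def gBen (x : ℝ) : ℝ := if 1 ≤ x then x * Real.log x - x + 1 else 0

lemma integrable_of_bdd {Ω : Type} [MeasurableSpace Ω] (P : Measure Ω) [IsProbabilityMeasure P]
    {Y : Ω → ℝ} (hY : Measurable Y) {M : ℝ} (hb : ∀ ω, |Y ω| ≤ M) : Integrable Y P :=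
  ⟨hY.aestronglyMeasurable, HasFiniteIntegral.of_bounded (C := M) (ae_of_all _ hb)⟩

lemma mgf_aux {Ω : Type} [MeasurableSpace Ω] (P : Measure Ω) [IsProbabilityMeasure P]
    (Y : Ω → ℝ) (hY : Measurable Y) (hb : ∀ ω, |Y ω| ≤ 2) (h0 : ∫ ω, Y ω ∂P = 0) (l : ℝ) :
    ∫ ω, Real.exp (l * Y ω) ∂P ≤ Real.exp (2 * l ^ 2) := by
  have hptw : ∀ ω, Real.exp (l * Y ω) ≤
      (2 - Y ω) / 4 * Real.exp (l * (-2)) + (2 + Y ω) / 4 * Real.exp (l * 2) := by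
    intro ω
    have h1 : |Y ω| ≤ 2 := hb ω
    have ha : (0:ℝ) ≤ (2 - Y ω) / 4 := by
      have := abs_le.1 h1; linarith [this.2]
    have hb' : (0:ℝ) ≤ (2 + Y ω) / 4 := by
      have := abs_le.1 h1; linarith [this.1]
    have hsum : (2 - Y ω) / 4 + (2 + Y ω) / 4 = 1 := by ring
    have := convexOn_exp.2 (Set.mem_univ (l * (-2))) (Set.mem_univ (l * 2)) ha hb' hsum
    simp only [smul_eq_mul] at this
    have harg : (2 - Y ω) / 4 * (l * (-2)) + (2 + Y ω) / 4 * (l * 2) = l * Y ω := by ring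
    rwa [harg] at this
  have hint1 : Integrable (fun ω => Real.exp (l * Y ω)) P := by
    refine integrable_of_bdd P ((hY.const_mul l).exp) (M := Real.exp (|l| * 2)) fun ω => ?_
    rw [abs_of_pos (Real.exp_pos _)]
    refine Real.exp_le_exp.2 ?_
    calc l * Y ω ≤ |l * Y ω| := le_abs_self _
    _ = |l| * |Y ω| := abs_mul _ _
    _ ≤ |l| * 2 := by gcongr; exact hb ω
  have hintY : Integrable Y P := integrable_of_bdd P hY (hb)
  have hint2 : Integrable (fun ω => (2 - Y ω) / 4 * Real.exp (l * (-2)) +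
      (2 + Y ω) / 4 * Real.exp (l * 2)) P := by
    apply Integrable.add <;> apply Integrable.mul_const
    · exact (Integrable.sub (integrable_const 2) hintY).div_const 4
    · exact (Integrable.add (integrable_const 2) hintY).div_const 4
  calc ∫ ω, Real.exp (l * Y ω) ∂P
      ≤ ∫ ω, ((2 - Y ω) / 4 * Real.exp (l * (-2)) + (2 + Y ω) / 4 * Real.exp (l * 2)) ∂P :=
        integral_mono hint1 hint2 hptw
    _ = Real.exp (l * (-2)) / 2 + Real.exp (l * 2) / 2 := by
        have heq : ∀ ω, (2 - Y ω) / 4 * Real.exp (l * (-2)) + (2 + Y ω) / 4 * Real.exp (l * 2)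
            = (Real.exp (l * (-2)) / 2 + Real.exp (l * 2) / 2)
              + Y ω * ((Real.exp (l * 2) - Real.exp (l * (-2))) / 4) := fun ω => by ring
        simp_rw [heq]
        rw [integral_add (integrable_const _) (hintY.mul_const _), integral_const,
          MeasureTheory.integral_mul_const, h0, zero_mul, add_zero]
        simp [measure_univ]
    _ = Real.cosh (2 * l) := by rw [Real.cosh_eq]; ring_nf
    _ ≤ Real.exp ((2*l) ^ 2 / 2) := Real.cosh_le_exp_half_sq _
    _ = Real.exp (2 * l ^ 2) := by ring_nf

lemma hoeffding_sum {Ω : Type} [MeasurableSpace Ω] (P : Measure Ω) [IsProbabilityMeasure P]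
    (Y : ℕ → Ω → ℝ) (hmeas : ∀ i, Measurable (Y i))
    (hindep : iIndepFun Y P)
    (hb : ∀ i ω, |Y i ω| ≤ 2) (h0 : ∀ i, ∫ ω, Y i ω ∂P = 0)
    (N : ℕ) {t : ℝ} (ht : 0 < t) :
    P {ω | (N:ℝ) * t ≤ ∑ i ∈ Finset.range N, Y i ω} ≤
      ENNReal.ofReal (Real.exp (-((N:ℝ) * t^2/8))) := by
  set l : ℝ := t / 4 with hl
  have hl0 : 0 ≤ l := by positivity
  have hSint : Integrable (fun ω => Real.exp (l * (∑ i ∈ Finset.range N, Y i) ω)) P := by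
    refine hindep.integrable_exp_mul_sum hmeas fun i _ => ?_
    refine integrable_of_bdd P ((hmeas i).const_mul l).exp (M := Real.exp (|l| * 2)) fun ω => ?_
    rw [abs_of_pos (Real.exp_pos _)]
    refine Real.exp_le_exp.2 ?_
    calc l * Y i ω ≤ |l * Y i ω| := le_abs_self _
    _ = |l| * |Y i ω| := abs_mul _ _
    _ ≤ |l| * 2 := by gcongr; exact hb i ω
  have hcher := measure_ge_le_exp_mul_mgf (μ := P) (X := ∑ i ∈ Finset.range N, Y i)
    ((N:ℝ) * t) hl0 hSint
  have hset : {ω | (N:ℝ) * t ≤ ∑ i ∈ Finset.range N, Y i ω}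
      = {ω | (N:ℝ) * t ≤ (∑ i ∈ Finset.range N, Y i) ω} := by
    ext ω; simp [Finset.sum_apply]
  have hmgf : mgf (∑ i ∈ Finset.range N, Y i) P l ≤ Real.exp ((N:ℝ) * (2 * l ^ 2)) := by
    rw [hindep.mgf_sum hmeas]
    calc ∏ i ∈ Finset.range N, mgf (Y i) P l
        ≤ ∏ _i ∈ Finset.range N, Real.exp (2 * l ^ 2) := by
          refine Finset.prod_le_prod (fun i _ => mgf_nonneg) fun i _ => ?_
          exact mgf_aux P (Y i) (hmeas i) (hb i) (h0 i) l
      _ = Real.exp ((N:ℝ) * (2 * l ^ 2)) := by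
          rw [Finset.prod_const, Finset.card_range, ← Real.exp_nat_mul]
  have hfin : P {ω | (N:ℝ) * t ≤ (∑ i ∈ Finset.range N, Y i) ω} ≤
      ENNReal.ofReal (Real.exp (-((N:ℝ) * t^2/8))) := by
    rw [← ENNReal.ofReal_toReal (measure_ne_top P _)]
    refine ENNReal.ofReal_le_ofReal ?_
    refine hcher.trans ?_
    calc Real.exp (-l * ((N:ℝ) * t)) * mgf (∑ i ∈ Finset.range N, Y i) P l
        ≤ Real.exp (-l * ((N:ℝ) * t)) * Real.exp ((N:ℝ) * (2 * l ^ 2)) := by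
          gcongr
      _ = Real.exp (-((N:ℝ) * t^2/8)) := by
          rw [← Real.exp_add]; congr 1; rw [hl]; ring
  rw [hset]; exact hfin

lemma measurable_coord (d : ℕ) (i : Fin d) :
    Measurable (fun x : EuclideanSpace ℝ (Fin d) => x i) :=
  (EuclideanSpace.proj (𝕜 := ℝ) i).continuous.measurable

lemma cube_measurable (d ℓ : ℕ) (k : Fin d → Fin (2 ^ ℓ)) : MeasurableSet (cube d ℓ k) := by
  have : cube d ℓ k = ⋂ i, (fun x : EuclideanSpace ℝ (Fin d) => x i) ⁻¹'
      (Set.Ioc (-1 + (k i : ℝ) * 2 ^ (1 - (ℓ : ℤ))) (-1 + ((k i : ℝ) + 1) * 2 ^ (1 - (ℓ : ℤ)))) := by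
    ext x; simp [cube]
  rw [this]
  exact MeasurableSet.iInter fun i => (measurable_coord d i) measurableSet_Ioc

lemma cube_disjoint (d ℓ : ℕ) {k k' : Fin d → Fin (2 ^ ℓ)} (hkk : k ≠ k') :
    Disjoint (cube d ℓ k) (cube d ℓ k') := by
  have key : ∀ (m m' : ℕ) (z : ℝ), m < m' →
      z ≤ -1 + ((m:ℝ)+1) * 2 ^ (1 - (ℓ : ℤ)) → -1 + (m':ℝ) * 2 ^ (1 - (ℓ : ℤ)) < z → False := by
    intro m m' z hmm h1 h2
    have hm : (m:ℝ) + 1 ≤ (m':ℝ) := by exact_mod_cast hmm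
    have hh : (0:ℝ) < 2 ^ (1 - (ℓ : ℤ)) := by positivity
    nlinarith
  rw [Set.disjoint_left]
  intro x hx hx'
  obtain ⟨i, hi⟩ : ∃ i, k i ≠ k' i := Function.ne_iff.1 hkk
  have h1 := hx i
  have h2 := hx' i
  rcases lt_or_gt_of_ne (fun h : (k i : ℕ) = (k' i : ℕ) => hi (Fin.ext h)) with h | h
  · exact key _ _ _ h h1.2 h2.1
  · exact key _ _ _ h h2.2 h1.1

lemma sum_indicator_le_one (d ℓ : ℕ) (x : EuclideanSpace ℝ (Fin d)) :
    ∑ k : Fin d → Fin (2 ^ ℓ), Set.indicator (cube d ℓ k) (fun _ => (1:ℝ)) x ≤ 1 := by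
  classical
  have : ∑ k : Fin d → Fin (2 ^ ℓ), Set.indicator (cube d ℓ k) (fun _ => (1:ℝ)) x
      = ((Finset.univ.filter (fun k : Fin d → Fin (2 ^ ℓ) => x ∈ cube d ℓ k)).card : ℝ) := by
    rw [Finset.card_filter]
    push_cast
    refine Finset.sum_congr rfl fun k _ => ?_
    by_cases h : x ∈ cube d ℓ k <;> simp [h]
  rw [this]
  have hcard : (Finset.univ.filter (fun k : Fin d → Fin (2 ^ ℓ) => x ∈ cube d ℓ k)).card ≤ 1 := by
    refine Finset.card_le_one.2 fun a ha b hb => ?_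
    simp only [Finset.mem_filter] at ha hb
    by_contra hab
    exact (Set.disjoint_left.1 (cube_disjoint d ℓ hab)) ha.2 hb.2
  exact_mod_cast hcard

lemma sum_measure_le_one (d ℓ : ℕ) (μ : Measure (EuclideanSpace ℝ (Fin d)))
    [IsProbabilityMeasure μ] :
    ∑ k : Fin d → Fin (2 ^ ℓ), (μ (cube d ℓ k)).toReal ≤ 1 := by
  have h1 : ∑ k : Fin d → Fin (2 ^ ℓ), μ (cube d ℓ k) ≤ 1 := by
    rw [← tsum_fintype (L := SummationFilter.unconditional _)]
    rw [← measure_iUnion (fun k k' hkk => cube_disjoint d ℓ hkk) (fun k => cube_measurable d ℓ k)]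
    simpa using prob_le_one
  calc ∑ k : Fin d → Fin (2 ^ ℓ), (μ (cube d ℓ k)).toReal
      = (∑ k : Fin d → Fin (2 ^ ℓ), μ (cube d ℓ k)).toReal :=
        (ENNReal.toReal_sum (fun k _ => measure_ne_top μ _)).symm
    _ ≤ (1 : ℝ≥0∞).toReal := ENNReal.toReal_mono one_ne_top h1
    _ = 1 := by simp

lemma empMeas_apply (d N : ℕ) (X : ℕ → EuclideanSpace ℝ (Fin d)) {F : Set (EuclideanSpace ℝ (Fin d))}
    (hF : MeasurableSet F) :
    ((empMeas d N X) F).toReal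
      = (N:ℝ)⁻¹ * ∑ i ∈ Finset.range N, Set.indicator F (fun _ => (1:ℝ)) (X i) := by
  rw [empMeas, Measure.smul_apply, smul_eq_mul, ENNReal.toReal_mul]
  rw [Measure.finset_sum_apply]
  rw [ENNReal.toReal_sum (fun i _ => by
    rw [Measure.dirac_apply' _ hF]
    by_cases h : X i ∈ F <;> simp [h])]
  congr 1
  · simp
  · refine Finset.sum_congr rfl fun i _ => ?_
    rw [Measure.dirac_apply' _ hF]
    by_cases h : X i ∈ F <;> simp [h]

lemma rpow_nat_aux (p : ℝ) (m : ℕ) : (2:ℝ) ^ (-(p * (m : ℝ))) = ((2:ℝ) ^ (-p)) ^ m := by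
  rw [← Real.rpow_natCast ((2:ℝ) ^ (-p)) m, ← Real.rpow_mul (by norm_num : (0:ℝ) ≤ 2)]
  ring_nf

lemma abs_sub_le_add {u v : ℝ} (hu : 0 ≤ u) (hv : 0 ≤ v) : |u - v| ≤ u + v := by
  rw [abs_sub_le_iff]; constructor <;> linarith

lemma dpcpt_le_chain (d : ℕ) (p : ℝ) (hp : 0 < p)
    (μ ν : Measure (EuclideanSpace ℝ (Fin d))) [IsProbabilityMeasure μ] [IsProbabilityMeasure ν]
    (L : ℕ) :
    DpCpt d p μ ν ≤ (2 ^ p - 1) / 2 * ∑ j ∈ Finset.range L, 2 ^ (-(p * ((j : ℝ) + 1))) *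
      (∑ k : Fin d → Fin (2 ^ (j + 1)),
        |(μ (cube d (j+1) k)).toReal - (ν (cube d (j+1) k)).toReal|)
      + 2 ^ (-(p * (L : ℝ))) := by
  have h2p : (1:ℝ) < 2 ^ p := Real.one_lt_rpow_iff_of_pos two_pos |>.2 (Or.inl ⟨one_lt_two, hp⟩)
  set r : ℝ := (2:ℝ) ^ (-p) with hrdef
  have hr0 : 0 < r := Real.rpow_pos_of_pos two_pos _
  have hr1 : r < 1 := Real.rpow_lt_one_of_one_lt_of_neg one_lt_two (by linarith)
  have hrinv : (2:ℝ) ^ p = r⁻¹ := by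
    rw [hrdef, ← Real.rpow_neg_one ((2:ℝ) ^ (-p)), ← Real.rpow_mul (by norm_num : (0:ℝ) ≤ 2)]
    ring_nf
  have hpow : ∀ j : ℕ, (2:ℝ) ^ (-(p * ((j:ℝ) + 1))) = r ^ (j + 1) := by
    intro j
    have : -(p * ((j:ℝ) + 1)) = -(p * ((j+1 : ℕ) : ℝ)) := by push_cast; ring
    rw [this, rpow_nat_aux]
  set S : ℕ → ℝ := fun j => ∑ k : Fin d → Fin (2 ^ (j + 1)),
    |(μ (cube d (j+1) k)).toReal - (ν (cube d (j+1) k)).toReal| with hSdef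
  have hS0 : ∀ j, 0 ≤ S j := fun j => Finset.sum_nonneg fun k _ => abs_nonneg _
  have hS2 : ∀ j, S j ≤ 2 := by
    intro j
    calc S j ≤ ∑ k : Fin d → Fin (2 ^ (j + 1)),
        ((μ (cube d (j+1) k)).toReal + (ν (cube d (j+1) k)).toReal) :=
          Finset.sum_le_sum fun k _ =>
            abs_sub_le_add ENNReal.toReal_nonneg ENNReal.toReal_nonneg
      _ = (∑ k : Fin d → Fin (2 ^ (j + 1)), (μ (cube d (j+1) k)).toReal)
          + ∑ k : Fin d → Fin (2 ^ (j + 1)), (ν (cube d (j+1) k)).toReal := Finset.sum_add_distrib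
      _ ≤ 1 + 1 := add_le_add (sum_measure_le_one _ _ μ) (sum_measure_le_one _ _ ν)
      _ = 2 := by norm_num
  set f : ℕ → ℝ := fun j => 2 ^ (-(p * ((j:ℝ) + 1))) * S j with hfdef
  have hf0 : ∀ j, 0 ≤ f j := fun j =>
    mul_nonneg (Real.rpow_nonneg (by norm_num) _) (hS0 j)
  have hfle : ∀ j, f j ≤ (2 * r) * r ^ j := by
    intro j
    have : f j ≤ r ^ (j+1) * 2 := by
      rw [hfdef]; simp only [hpow]
      exact mul_le_mul_of_nonneg_left (hS2 j) (pow_nonneg hr0.le _)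
    calc f j ≤ r ^ (j+1) * 2 := this
      _ = (2 * r) * r ^ j := by ring
  have hgsum : Summable (fun j : ℕ => (2 * r) * r ^ j) :=
    (summable_geometric_of_lt_one hr0.le hr1).mul_left _
  have hsum : Summable f := Summable.of_nonneg_of_le hf0 hfle hgsum
  have hsplit : ∑' j, f j = (∑ j ∈ Finset.range L, f j) + ∑' i : ℕ, f (i + L) :=
    (hsum.sum_add_tsum_nat_add L).symm
  have htail : ∑' i : ℕ, f (i + L) ≤ (2 * r * r ^ L) * (1 - r)⁻¹ := by
    have h1 : ∑' i : ℕ, f (i + L) ≤ ∑' i : ℕ, ((2 * r * r ^ L) * r ^ i) := by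
      refine Summable.tsum_le_tsum (fun i => ?_) ((_root_.summable_nat_add_iff L).2 hsum)
        ((summable_geometric_of_lt_one hr0.le hr1).mul_left _)
      calc f (i + L) ≤ (2 * r) * r ^ (i + L) := hfle _
        _ = (2 * r * r ^ L) * r ^ i := by rw [pow_add]; ring
    rw [_root_.tsum_mul_left, tsum_geometric_of_lt_one hr0.le hr1] at h1
    exact h1
  have hA : (0:ℝ) ≤ (2 ^ p - 1) / 2 := by linarith
  have hkey : DpCpt d p μ ν ≤ (2 ^ p - 1) / 2 * ((∑ j ∈ Finset.range L, f j)
      + (2 * r * r ^ L) * (1 - r)⁻¹) := by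
    rw [DpCpt]
    refine mul_le_mul_of_nonneg_left ?_ hA
    rw [show (∑' (ℓ : ℕ), 2 ^ (-(p * ((ℓ : ℝ) + 1))) *
        ∑ k : Fin d → Fin (2 ^ (ℓ + 1)),
        |(μ (cube d (ℓ + 1) k)).toReal - (ν (cube d (ℓ + 1) k)).toReal|) = ∑' j, f j from rfl]
    rw [hsplit]
    exact add_le_add_right htail _
  refine hkey.trans ?_
  rw [mul_add]
  refine add_le_add_right (le_of_eq ?_) _
  rw [rpow_nat_aux, ← hrdef]
  rw [hrinv]
  have h1r : (1:ℝ) - r ≠ 0 := by linarith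
  field_simp

lemma level_bound (d : ℕ) (μ : Measure (EuclideanSpace ℝ (Fin d))) [IsProbabilityMeasure μ]
    {Ω : Type} [mΩ : MeasurableSpace Ω] (P : Measure Ω) [IsProbabilityMeasure P]
    (X : ℕ → Ω → EuclideanSpace ℝ (Fin d)) (hXm : ∀ k, Measurable (X k))
    (hind : iIndepFun X P) (hlaw : ∀ k, Measure.map (X k) P = μ)
    (N : ℕ) (hN : N ≠ 0) (ℓ : ℕ) {t : ℝ} (ht : 0 < t) :
    P {ω | t ≤ ∑ k : Fin d → Fin (2 ^ ℓ),
        |(empMeas d N (fun i => X i ω) (cube d ℓ k)).toReal - (μ (cube d ℓ k)).toReal|} ≤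
      ENNReal.ofReal ((2:ℝ) ^ (2 ^ (d * ℓ)) * Real.exp (-((N:ℝ) * t^2/8))) := by
  classical
  set sgn : Bool → ℝ := fun b => if b then 1 else -1 with hsgn
  have hsgnabs : ∀ b, |sgn b| = 1 := by intro b; cases b <;> simp [hsgn]
  set g : ((Fin d → Fin (2 ^ ℓ)) → Bool) → EuclideanSpace ℝ (Fin d) → ℝ :=
    fun ε x => ∑ k : Fin d → Fin (2 ^ ℓ), sgn (ε k) *
      (Set.indicator (cube d ℓ k) (fun _ => (1:ℝ)) x - (μ (cube d ℓ k)).toReal) with hg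
  have hgmeas : ∀ ε, Measurable (g ε) := by
    intro ε
    refine Finset.measurable_sum _ fun k _ => ?_
    exact (((measurable_const.indicator (cube_measurable d ℓ k)).sub
      measurable_const).const_mul _)
  have hgbdd : ∀ ε x, |g ε x| ≤ 2 := by
    intro ε x
    calc |g ε x| ≤ ∑ k : Fin d → Fin (2 ^ ℓ), |sgn (ε k) *
        (Set.indicator (cube d ℓ k) (fun _ => (1:ℝ)) x - (μ (cube d ℓ k)).toReal)| :=
          Finset.abs_sum_le_sum_abs _ _
      _ ≤ ∑ k : Fin d → Fin (2 ^ ℓ), (Set.indicator (cube d ℓ k) (fun _ => (1:ℝ)) x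
          + (μ (cube d ℓ k)).toReal) := by
          refine Finset.sum_le_sum fun k _ => ?_
          rw [abs_mul, hsgnabs, one_mul]
          exact abs_sub_le_add (Set.indicator_nonneg (fun _ _ => zero_le_one) _)
            ENNReal.toReal_nonneg
      _ = (∑ k : Fin d → Fin (2 ^ ℓ), Set.indicator (cube d ℓ k) (fun _ => (1:ℝ)) x)
          + ∑ k : Fin d → Fin (2 ^ ℓ), (μ (cube d ℓ k)).toReal := Finset.sum_add_distrib
      _ ≤ 1 + 1 := add_le_add (sum_indicator_le_one d ℓ x) (sum_measure_le_one d ℓ μ)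
      _ = 2 := by norm_num
  have hgint : ∀ ε, ∫ x, g ε x ∂μ = 0 := by
    intro ε
    rw [hg]
    rw [integral_finset_sum _ (fun k _ => ?_)]
    · refine Finset.sum_eq_zero fun k _ => ?_
      rw [integral_const_mul, integral_sub ((integrable_const (1:ℝ)).indicator
          (cube_measurable d ℓ k)) (integrable_const _)]
      rw [MeasureTheory.integral_indicator_const _ (cube_measurable d ℓ k), integral_const]
      simp [measure_univ, Measure.real]
    · exact (((integrable_const (1:ℝ)).indicator (cube_measurable d ℓ k)).sub
        (integrable_const _)).const_mul _
  -- subset of union over signs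
  have hsubset : {ω | t ≤ ∑ k : Fin d → Fin (2 ^ ℓ),
      |(empMeas d N (fun i => X i ω) (cube d ℓ k)).toReal - (μ (cube d ℓ k)).toReal|} ⊆
      ⋃ ε : (Fin d → Fin (2 ^ ℓ)) → Bool,
        {ω | (N:ℝ) * t ≤ ∑ i ∈ Finset.range N, g ε (X i ω)} := by
    intro ω hω
    simp only [Set.mem_setOf_eq] at hω
    set a : (Fin d → Fin (2 ^ ℓ)) → ℝ := fun k =>
      (empMeas d N (fun i => X i ω) (cube d ℓ k)).toReal - (μ (cube d ℓ k)).toReal with ha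
    refine Set.mem_iUnion.2 ⟨fun k => decide (0 ≤ a k), ?_⟩
    simp only [Set.mem_setOf_eq]
    have hNpos : (0:ℝ) < N := by exact_mod_cast Nat.pos_of_ne_zero hN
    have hswap : ∑ i ∈ Finset.range N, g (fun k => decide (0 ≤ a k)) (X i ω)
        = (N:ℝ) * ∑ k : Fin d → Fin (2 ^ ℓ), sgn (decide (0 ≤ a k)) * a k := by
      rw [hg]
      rw [Finset.sum_comm]
      rw [Finset.mul_sum]
      refine Finset.sum_congr rfl fun k _ => ?_
      rw [← Finset.mul_sum]
      have hemp : ((empMeas d N fun i => X i ω) (cube d ℓ k)).toReal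
          = (N:ℝ)⁻¹ * ∑ i ∈ Finset.range N, Set.indicator (cube d ℓ k) (fun _ => (1:ℝ)) (X i ω) :=
        empMeas_apply d N _ (cube_measurable d ℓ k)
      have hsum' : ∑ i ∈ Finset.range N, (Set.indicator (cube d ℓ k) (fun _ => (1:ℝ)) (X i ω)
          - (μ (cube d ℓ k)).toReal)
          = (N:ℝ) * (((empMeas d N fun i => X i ω) (cube d ℓ k)).toReal
            - (μ (cube d ℓ k)).toReal) := by
        rw [Finset.sum_sub_distrib, Finset.sum_const, Finset.card_range, nsmul_eq_mul, hemp]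
        field_simp
      rw [hsum']
      ring
    rw [hswap]
    have habs : ∀ k, sgn (decide (0 ≤ a k)) * a k = |a k| := by
      intro k
      by_cases h : 0 ≤ a k
      · simp [hsgn, h, abs_of_nonneg h]
      · rw [decide_eq_false h, abs_of_neg (not_le.1 h)]; simp [hsgn]
    calc (N:ℝ) * t ≤ (N:ℝ) * ∑ k : Fin d → Fin (2 ^ ℓ), |a k| := by
          refine mul_le_mul_of_nonneg_left ?_ hNpos.le
          exact hω
      _ = (N:ℝ) * ∑ k : Fin d → Fin (2 ^ ℓ), sgn (decide (0 ≤ a k)) * a k := by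
          rw [Finset.sum_congr rfl fun k _ => (habs k).symm]
  -- union bound
  refine (measure_mono hsubset).trans ?_
  refine (measure_iUnion_le _).trans ?_
  have hone : ∀ ε : (Fin d → Fin (2 ^ ℓ)) → Bool,
      P {ω | (N:ℝ) * t ≤ ∑ i ∈ Finset.range N, g ε (X i ω)} ≤
        ENNReal.ofReal (Real.exp (-((N:ℝ) * t^2/8))) := by
    intro ε
    exact hoeffding_sum P (fun i ω => g ε (X i ω)) (fun i => (hgmeas ε).comp (hXm i))
      (hind.comp _ fun i => hgmeas ε)
      (fun i ω => hgbdd ε (X i ω))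
      (fun i => by
        rw [← integral_map (hXm i).aemeasurable (hgmeas ε).aestronglyMeasurable, hlaw i]
        exact hgint ε)
      N ht
  calc ∑' ε : (Fin d → Fin (2 ^ ℓ)) → Bool,
      P {ω | (N:ℝ) * t ≤ ∑ i ∈ Finset.range N, g ε (X i ω)}
      ≤ ∑' ε : (Fin d → Fin (2 ^ ℓ)) → Bool,
        ENNReal.ofReal (Real.exp (-((N:ℝ) * t^2/8))) := ENNReal.tsum_le_tsum hone
    _ = (Fintype.card ((Fin d → Fin (2 ^ ℓ)) → Bool)) *
        ENNReal.ofReal (Real.exp (-((N:ℝ) * t^2/8))) := by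
        rw [tsum_fintype]
        simp [Finset.sum_const, nsmul_eq_mul]
    _ ≤ ENNReal.ofReal ((2:ℝ) ^ (2 ^ (d * ℓ)) * Real.exp (-((N:ℝ) * t^2/8))) := by
        have hcard : Fintype.card ((Fin d → Fin (2 ^ ℓ)) → Bool) = 2 ^ (2 ^ (d * ℓ)) := by
          rw [Fintype.card_fun]
          simp [Fintype.card_fun, mul_comm d ℓ, pow_mul]
        rw [hcard]
        rw [ENNReal.ofReal_mul (by positivity)]
        refine le_of_eq ?_
        rw [← ENNReal.ofReal_natCast]
        congr 1
        push_cast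
        ring

lemma master_sum (d : ℕ) (hd : 1 ≤ d) (r b : ℝ) (hr : (d:ℝ) ≤ r) (hb : 1 ≤ b) (L : ℕ) :
    ∑ j ∈ Finset.range L, (2:ℝ) ^ (2 ^ (d * (j+1))) *
      Real.exp (-(2 * b * (2:ℝ) ^ (r * ((j:ℝ)+1)))) ≤ 2 * Real.exp (-b) := by
  have hterm : ∀ j : ℕ, (2:ℝ) ^ (2 ^ (d * (j+1))) *
      Real.exp (-(2 * b * (2:ℝ) ^ (r * ((j:ℝ)+1)))) ≤ (Real.exp (-(2*b))) ^ (j+1) := by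
    intro j
    have h2n : (2:ℝ) ^ (2 ^ (d * (j+1))) = Real.exp ((2 ^ (d * (j+1)) : ℕ) * Real.log 2) := by
      rw [Real.exp_nat_mul, Real.exp_log two_pos]
    have hb0 : (0:ℝ) < b := by linarith
    have hcast : ((2 ^ (d * (j+1)) : ℕ) : ℝ) = (2:ℝ) ^ ((d * (j+1) : ℕ) : ℝ) := by
      rw [Real.rpow_natCast, Nat.cast_pow, Nat.cast_ofNat]
    have hmono : (2:ℝ) ^ ((d * (j+1) : ℕ) : ℝ) ≤ (2:ℝ) ^ (r * ((j:ℝ)+1)) := by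
      apply Real.rpow_le_rpow_left_iff (x := 2) one_lt_two |>.2
      push_cast
      nlinarith [(by positivity : (0:ℝ) ≤ (j:ℝ)), (by exact_mod_cast hd : (1:ℝ) ≤ (d:ℝ))]
    have hent : ((2 ^ (d * (j+1)) : ℕ) : ℝ) * Real.log 2 ≤ b * (2:ℝ) ^ (r * ((j:ℝ)+1)) := by
      rw [hcast]
      calc (2:ℝ) ^ ((d * (j+1) : ℕ) : ℝ) * Real.log 2
          ≤ (2:ℝ) ^ (r * ((j:ℝ)+1)) * 1 := by
            refine mul_le_mul hmono ?_ (Real.log_nonneg one_le_two)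
              (Real.rpow_nonneg (by norm_num) _)
            · calc Real.log 2 ≤ Real.log (Real.exp 1) := by
                    refine Real.log_le_log two_pos ?_
                    linarith [Real.add_one_le_exp (1:ℝ)]
                _ = 1 := Real.log_exp 1
        _ ≤ b * (2:ℝ) ^ (r * ((j:ℝ)+1)) := by
            have h0 : (0:ℝ) ≤ (2:ℝ) ^ (r * ((j:ℝ)+1)) := Real.rpow_nonneg (by norm_num) _
            nlinarith
    have hgrow : 2 * ((j:ℝ)+1) ≤ (2:ℝ) ^ (r * ((j:ℝ)+1)) := by
      have h1 : (2:ℝ) ^ (((j+1 : ℕ)) : ℝ) ≤ (2:ℝ) ^ (r * ((j:ℝ)+1)) := by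
        apply Real.rpow_le_rpow_left_iff (x := 2) one_lt_two |>.2
        push_cast
        nlinarith [(by positivity : (0:ℝ) ≤ (j:ℝ)), hr, (by exact_mod_cast hd : (1:ℝ) ≤ (d:ℝ))]
      have h2 : 2 * ((j:ℝ)+1) ≤ (2:ℝ) ^ (((j+1:ℕ)) : ℝ) := by
        rw [Real.rpow_natCast]
        have := Nat.lt_two_pow_self (n := j)
        have : ((j:ℝ)+1) ≤ (2:ℝ) ^ j := by exact_mod_cast Nat.lt_two_pow_self (n := j)
        calc 2 * ((j:ℝ)+1) ≤ 2 * (2:ℝ)^j := by linarith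
          _ = (2:ℝ)^(j+1) := by ring
      linarith
    rw [h2n, ← Real.exp_add, ← Real.exp_nat_mul]
    refine Real.exp_le_exp.2 ?_
    have hj1 : ((j+1:ℕ):ℝ) = (j:ℝ)+1 := by push_cast; ring
    rw [hj1]
    nlinarith [hent, hgrow, mul_le_mul_of_nonneg_left hgrow hb0.le]
  calc ∑ j ∈ Finset.range L, (2:ℝ) ^ (2 ^ (d * (j+1))) *
      Real.exp (-(2 * b * (2:ℝ) ^ (r * ((j:ℝ)+1))))
      ≤ ∑ j ∈ Finset.range L, (Real.exp (-(2*b))) ^ (j+1) :=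
        Finset.sum_le_sum fun j _ => hterm j
    _ ≤ Real.exp (-(2*b)) * (1 - Real.exp (-(2*b)))⁻¹ := by
        have hq1 : Real.exp (-(2*b)) < 1 := by
          rw [Real.exp_lt_one_iff]; linarith
        have hq0 : 0 < Real.exp (-(2*b)) := Real.exp_pos _
        have : ∑ j ∈ Finset.range L, (Real.exp (-(2*b))) ^ (j+1)
            = Real.exp (-(2*b)) * ∑ j ∈ Finset.range L, (Real.exp (-(2*b))) ^ j := by
          rw [Finset.mul_sum]; exact Finset.sum_congr rfl fun j _ => by ring
        rw [this]
        refine mul_le_mul_of_nonneg_left ?_ hq0.le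
        calc ∑ j ∈ Finset.range L, (Real.exp (-(2*b))) ^ j
            ≤ ∑' j : ℕ, (Real.exp (-(2*b))) ^ j :=
              Summable.sum_le_tsum _ (fun j _ => by positivity)
                (summable_geometric_of_lt_one hq0.le hq1)
          _ = (1 - Real.exp (-(2*b)))⁻¹ := tsum_geometric_of_lt_one hq0.le hq1
    _ ≤ 2 * Real.exp (-b) := by
        have h1 : Real.exp (-(2*b)) ≤ Real.exp (-1) := by
          refine Real.exp_le_exp.2 (by linarith)
        have he : Real.exp (-1) ≤ 1/2 := by
          rw [Real.exp_neg]
          rw [div_eq_mul_inv, one_mul]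
          refine inv_anti₀ two_pos ?_
          linarith [Real.add_one_le_exp (1:ℝ)]
        have hinv : (1 - Real.exp (-(2*b)))⁻¹ ≤ 2 := by
          rw [inv_le_iff_one_le_mul₀ (by linarith)]
          linarith
        have hsplit : Real.exp (-(2*b)) = Real.exp (-b) * Real.exp (-b) := by
          rw [← Real.exp_add]; ring_nf
        calc Real.exp (-(2*b)) * (1 - Real.exp (-(2*b)))⁻¹
            ≤ Real.exp (-(2*b)) * 2 := by
              exact mul_le_mul_of_nonneg_left hinv (Real.exp_pos _).le
          _ = 2 * (Real.exp (-b) * Real.exp (-b)) := by rw [hsplit]; ring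
          _ ≤ 2 * (1 * Real.exp (-b)) := by
              have : Real.exp (-b) ≤ 1 := by
                rw [Real.exp_le_one_iff]; linarith
              have h0 : 0 ≤ Real.exp (-b) := (Real.exp_pos _).le
              nlinarith
          _ = 2 * Real.exp (-b) := by ring

lemma exists_L (p x : ℝ) (hp : 0 < p) (hx0 : 0 < x) (hx1 : x ≤ 1) :
    ∃ L : ℕ, 1 ≤ L ∧ (2:ℝ) ^ (-(p * (L:ℝ))) ≤ x / 2 ∧
      (2:ℝ) ^ (p * (L:ℝ)) ≤ 2 ^ (p+1) / x ∧
      (L:ℝ) ≤ 1 + Real.log (2/x) / (p * Real.log 2) := by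
  have hlog2 : 0 < Real.log 2 := Real.log_pos one_lt_two
  have h2x : (1:ℝ) ≤ 2/x := by
    rw [le_div_iff₀ hx0]; linarith
  have hlogpos : 0 ≤ Real.log (2/x) := Real.log_nonneg h2x
  set y : ℝ := Real.log (2/x) / (p * Real.log 2) with hy
  have hy0 : 0 ≤ y := by positivity
  refine ⟨max 1 ⌈y⌉₊, le_max_left _ _, ?_, ?_, ?_⟩
  · -- 2^(-pL) ≤ x/2
    have hLy : y ≤ (max 1 ⌈y⌉₊ : ℕ) := by
      calc y ≤ (⌈y⌉₊ : ℝ) := Nat.le_ceil y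
        _ ≤ ((max 1 ⌈y⌉₊ : ℕ) : ℝ) := by exact_mod_cast Nat.cast_le.2 (le_max_right _ _)
    rw [Real.rpow_def_of_pos two_pos]
    rw [show Real.log 2 * -(p * ((max 1 ⌈y⌉₊ : ℕ):ℝ)) = -(p * Real.log 2 * ((max 1 ⌈y⌉₊ : ℕ):ℝ)) by ring]
    have : Real.log (2/x) ≤ p * Real.log 2 * ((max 1 ⌈y⌉₊ : ℕ):ℝ) := by
      rw [hy] at hLy
      have hpl : 0 < p * Real.log 2 := by positivity
      calc Real.log (2/x) = p * Real.log 2 * y := by rw [hy]; field_simp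
        _ ≤ p * Real.log 2 * ((max 1 ⌈y⌉₊ : ℕ):ℝ) := by
            exact mul_le_mul_of_nonneg_left hLy hpl.le
    calc Real.exp (-(p * Real.log 2 * ((max 1 ⌈y⌉₊ : ℕ):ℝ)))
        ≤ Real.exp (-Real.log (2/x)) := Real.exp_le_exp.2 (by linarith)
      _ = x / 2 := by
          rw [Real.exp_neg, Real.exp_log (by positivity)]
          rw [inv_div]
  · -- 2^(pL) ≤ 2^(p+1)/x
    have hLle : ((max 1 ⌈y⌉₊ : ℕ) : ℝ) ≤ 1 + y := by
      rcases max_cases 1 ⌈y⌉₊ with ⟨h, _⟩ | ⟨h, _⟩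
      · rw [h]; push_cast; linarith
      · rw [h]
        calc (⌈y⌉₊ : ℝ) ≤ y + 1 := le_of_lt (Nat.ceil_lt_add_one hy0)
          _ = 1 + y := by ring
    rw [Real.rpow_def_of_pos two_pos]
    have hexp : Real.log 2 * (p * ((max 1 ⌈y⌉₊ : ℕ):ℝ)) ≤ Real.log ((2:ℝ)^(p+1)/x) := by
      have h1 : Real.log ((2:ℝ)^(p+1)/x) = (p+1) * Real.log 2 - Real.log x := by
        rw [Real.log_div (by positivity) (ne_of_gt hx0), Real.log_rpow two_pos]
      have h2 : Real.log (2/x) = Real.log 2 - Real.log x := by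
        rw [Real.log_div (by norm_num) (ne_of_gt hx0)]
      have h3 : p * ((max 1 ⌈y⌉₊ : ℕ):ℝ) ≤ p * (1 + y) := mul_le_mul_of_nonneg_left hLle hp.le
      have h4 : p * (1 + y) * Real.log 2 = p * Real.log 2 + Real.log (2/x) := by
        rw [hy]; field_simp
      calc Real.log 2 * (p * ((max 1 ⌈y⌉₊ : ℕ):ℝ)) ≤ Real.log 2 * (p * (1+y)) := by
            exact mul_le_mul_of_nonneg_left h3 hlog2.le
        _ = p * Real.log 2 + Real.log (2/x) := by rw [← h4]; ring
        _ ≤ (p+1) * Real.log 2 - Real.log x := by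
            rw [h2]; linarith
        _ = Real.log ((2:ℝ)^(p+1)/x) := h1.symm
    calc Real.exp (Real.log 2 * (p * ((max 1 ⌈y⌉₊ : ℕ):ℝ)))
        ≤ Real.exp (Real.log ((2:ℝ)^(p+1)/x)) := Real.exp_le_exp.2 hexp
      _ = (2:ℝ)^(p+1)/x := Real.exp_log (by positivity)
  · rcases max_cases 1 ⌈y⌉₊ with ⟨h, _⟩ | ⟨h, _⟩
    · rw [h]; push_cast; linarith
    · rw [h]
      calc (⌈y⌉₊ : ℝ) ≤ y + 1 := le_of_lt (Nat.ceil_lt_add_one hy0)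
        _ = 1 + Real.log (2/x) / (p * Real.log 2) := by rw [hy]; ring

lemma empMeas_prob (d N : ℕ) (hN : N ≠ 0) (X : ℕ → EuclideanSpace ℝ (Fin d)) :
    IsProbabilityMeasure (empMeas d N X) := by
  constructor
  rw [empMeas, Measure.smul_apply, Measure.finset_sum_apply, smul_eq_mul]
  have : ∀ i ∈ Finset.range N, Measure.dirac (X i) (Set.univ : Set (EuclideanSpace ℝ (Fin d))) = 1 :=
    fun i _ => by simp
  rw [Finset.sum_congr rfl this, Finset.sum_const, Finset.card_range, nsmul_eq_mul, mul_one]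
  exact ENNReal.inv_mul_cancel (by exact_mod_cast hN) (by simp)

lemma assemble (d : ℕ) (hd : 1 ≤ d) (p : ℝ) (hp : 0 < p)
    (μ : Measure (EuclideanSpace ℝ (Fin d))) [IsProbabilityMeasure μ]
    {Ω : Type} [mΩ : MeasurableSpace Ω] (P : Measure Ω) [IsProbabilityMeasure P]
    (X : ℕ → Ω → EuclideanSpace ℝ (Fin d)) (hXm : ∀ k, Measurable (X k))
    (hind : iIndepFun X P) (hlaw : ∀ k, Measure.map (X k) P = μ)
    (N : ℕ) (hN : 1 ≤ N) (x : ℝ)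
    (r b : ℝ) (hr1 : (d:ℝ) ≤ r) (hb : 1 ≤ b)
    (t : ℕ → ℝ) (htpos : ∀ ℓ, 0 < t ℓ)
    (L : ℕ) (hL1 : 1 ≤ L)
    (hchain : (2 ^ p - 1) / 2 * ∑ j ∈ Finset.range L, 2 ^ (-(p * ((j:ℝ)+1))) * t (j+1)
      + 2 ^ (-(p * (L:ℝ))) ≤ x)
    (hteq : ∀ ℓ : ℕ, (N:ℝ) * (t ℓ)^2 / 8 = 2 * b * (2:ℝ) ^ (r * (ℓ:ℝ))) :
    P {ω | x ≤ DpCpt d p (empMeas d N fun k => X k ω) μ} ≤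
      ENNReal.ofReal (2 * Real.exp (-b)) := by
  have hA : (0:ℝ) < (2 ^ p - 1) / 2 := by
    have : (1:ℝ) < 2 ^ p := Real.one_lt_rpow_iff_of_pos two_pos |>.2 (Or.inl ⟨one_lt_two, hp⟩)
    linarith
  -- event inclusion
  have hsubset : {ω | x ≤ DpCpt d p (empMeas d N fun k => X k ω) μ} ⊆
      ⋃ j ∈ Finset.range L, {ω | t (j+1) ≤ ∑ k : Fin d → Fin (2 ^ (j+1)),
        |(empMeas d N (fun i => X i ω) (cube d (j+1) k)).toReal
          - (μ (cube d (j+1) k)).toReal|} := by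
    intro ω hω
    simp only [Set.mem_setOf_eq] at hω
    by_contra hnot
    simp only [Set.mem_iUnion, Finset.mem_range, Set.mem_setOf_eq, not_exists, not_le] at hnot
    haveI := empMeas_prob d N (by omega) (fun k => X k ω)
    have hle := dpcpt_le_chain d p hp (empMeas d N fun k => X k ω) μ L
    have hstrict : (2 ^ p - 1) / 2 * ∑ j ∈ Finset.range L, 2 ^ (-(p * ((j : ℝ) + 1))) *
        (∑ k : Fin d → Fin (2 ^ (j + 1)),
          |((empMeas d N fun k => X k ω) (cube d (j+1) k)).toReal - (μ (cube d (j+1) k)).toReal|)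
        < (2 ^ p - 1) / 2 * ∑ j ∈ Finset.range L, 2 ^ (-(p * ((j:ℝ)+1))) * t (j+1) := by
      refine mul_lt_mul_of_pos_left ?_ hA
      refine Finset.sum_lt_sum_of_nonempty ?_ fun j hj => ?_
      · exact Finset.nonempty_range_iff.2 (by omega)
      · refine mul_lt_mul_of_pos_left ?_ (Real.rpow_pos_of_pos two_pos _)
        exact hnot j (Finset.mem_range.1 hj)
    linarith
  refine (measure_mono hsubset).trans ?_
  refine (measure_biUnion_finset_le _ _).trans ?_
  have hlvl : ∀ j ∈ Finset.range L,
      P {ω | t (j+1) ≤ ∑ k : Fin d → Fin (2 ^ (j+1)),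
        |(empMeas d N (fun i => X i ω) (cube d (j+1) k)).toReal
          - (μ (cube d (j+1) k)).toReal|} ≤
      ENNReal.ofReal ((2:ℝ) ^ (2 ^ (d * (j+1))) *
        Real.exp (-(2 * b * (2:ℝ) ^ (r * ((j:ℝ)+1))))) := by
    intro j _
    have h := level_bound d μ P X hXm hind hlaw N (by omega) (j+1) (htpos (j+1))
    have harg : -((N:ℝ) * (t (j+1))^2/8) = -(2 * b * (2:ℝ) ^ (r * ((j:ℝ)+1))) := by
      rw [hteq (j+1)]
      push_cast
      ring_nf
    rw [harg] at h
    exact h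
  calc ∑ j ∈ Finset.range L, P {ω | t (j+1) ≤ ∑ k : Fin d → Fin (2 ^ (j+1)),
        |(empMeas d N (fun i => X i ω) (cube d (j+1) k)).toReal
          - (μ (cube d (j+1) k)).toReal|}
      ≤ ∑ j ∈ Finset.range L, ENNReal.ofReal ((2:ℝ) ^ (2 ^ (d * (j+1))) *
          Real.exp (-(2 * b * (2:ℝ) ^ (r * ((j:ℝ)+1))))) := Finset.sum_le_sum hlvl
    _ = ENNReal.ofReal (∑ j ∈ Finset.range L, (2:ℝ) ^ (2 ^ (d * (j+1))) *
          Real.exp (-(2 * b * (2:ℝ) ^ (r * ((j:ℝ)+1))))) := by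
        rw [ENNReal.ofReal_sum_of_nonneg (fun j _ => by positivity)]
    _ ≤ ENNReal.ofReal (2 * Real.exp (-b)) :=
        ENNReal.ofReal_le_ofReal (master_sum d hd r b hr1 hb L)

lemma chain_term (p q w κ : ℝ) (L : ℕ) :
    ∑ j ∈ Finset.range L, (2:ℝ)^(-(p*((j:ℝ)+1))) * (κ*w*(2:ℝ)^(q*((j:ℝ)+1)))
      = κ*w* ∑ j ∈ Finset.range L, ((2:ℝ)^(q-p))^(j+1) := by
  rw [Finset.mul_sum]
  refine Finset.sum_congr rfl fun j _ => ?_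
  have h1 : ((2:ℝ)^(q-p))^(j+1) = (2:ℝ)^((q-p)*((j:ℝ)+1)) := by
    rw [← Real.rpow_natCast ((2:ℝ)^(q-p)) (j+1), ← Real.rpow_mul (by norm_num : (0:ℝ) ≤ 2)]
    push_cast; ring_nf
  have h2 : (2:ℝ)^((q-p)*((j:ℝ)+1)) = 2^(-(p*((j:ℝ)+1))) * 2^(q*((j:ℝ)+1)) := by
    rw [← Real.rpow_add two_pos]; congr 1; ring
  rw [h1, h2]; ring

lemma geom_le_tsum (u : ℝ) (h0 : 0 ≤ u) (h1 : u < 1) (L : ℕ) :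
    ∑ j ∈ Finset.range L, u^(j+1) ≤ u*(1-u)⁻¹ := by
  have : ∑ j ∈ Finset.range L, u^(j+1) = u * ∑ j ∈ Finset.range L, u^j := by
    rw [Finset.mul_sum]; exact Finset.sum_congr rfl fun j _ => by ring
  rw [this]
  refine mul_le_mul_of_nonneg_left ?_ h0
  calc ∑ j ∈ Finset.range L, u^j ≤ ∑' j : ℕ, u^j :=
        Summable.sum_le_tsum _ (fun j _ => by positivity) (summable_geometric_of_lt_one h0 h1)
    _ = (1-u)⁻¹ := tsum_geometric_of_lt_one h0 h1

lemma geom_le_big (u : ℝ) (h1 : 1 < u) (L : ℕ) :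
    ∑ j ∈ Finset.range L, u^(j+1) ≤ u^(L+1)*(u-1)⁻¹ := by
  have h0 : (0:ℝ) < u - 1 := by linarith
  have hgs := geom_sum_eq (by intro h; rw [h] at h1; exact lt_irrefl _ h1 : u ≠ 1) (L+1)
  have hss : ∑ i ∈ Finset.range (L+1), u^i = (∑ j ∈ Finset.range L, u^(j+1)) + 1 := by
    rw [Finset.sum_range_succ']; simp
  rw [hgs] at hss
  have hfin : ∑ j ∈ Finset.range L, u ^ (j + 1) = (u^(L+1) - 1)/(u-1) - 1 := by linarith
  rw [hfin, div_eq_mul_inv]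
  nlinarith [inv_pos.2 h0]

lemma t_sq (κ w r : ℝ) (m : ℝ) :
    (κ*w*(2:ℝ)^((r/2)*m))^2 = κ^2*w^2*(2:ℝ)^(r*m) := by
  have h : ((2:ℝ)^((r/2)*m))^2 = (2:ℝ)^(r*m) := by
    rw [← Real.rpow_natCast ((2:ℝ)^((r/2)*m)) 2, ← Real.rpow_mul (by norm_num : (0:ℝ) ≤ 2)]
    norm_num
    ring_nf
  rw [mul_pow, mul_pow, h]

lemma rpow_pow (a : ℝ) (L : ℕ) : ((2:ℝ)^a)^L = (2:ℝ)^(a*(L:ℝ)) := by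
  rw [← Real.rpow_natCast ((2:ℝ)^a) L, ← Real.rpow_mul (by norm_num : (0:ℝ) ≤ 2)]

lemma sum_cast_conv (p q w κ : ℝ) (L : ℕ) :
    ∑ j ∈ Finset.range L, (2:ℝ)^(-(p*((j:ℝ)+1))) * (κ*w*(2:ℝ)^(q * (((j:ℕ)+1:ℕ):ℝ)))
      = ∑ j ∈ Finset.range L, (2:ℝ)^(-(p*((j:ℝ)+1))) * (κ*w*(2:ℝ)^(q*((j:ℝ)+1))) := by
  refine Finset.sum_congr rfl fun j _ => ?_
  norm_num

lemma inv_half (A s x : ℝ) (hA : A ≠ 0) (hs : s ≠ 0) :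
    A * ((2*A*s)⁻¹ * x * s) = x/2 := by field_simp

lemma inv_half2 (A c g x : ℝ) (hA : A ≠ 0) (hc : c ≠ 0) (hg : g ≠ 0) :
    A * ((2*A*c)⁻¹ * (x/g) * (c * g)) = x/2 := by field_simp

lemma inv_half3 (A K x : ℝ) (hA : A ≠ 0) (hK : K ≠ 0) :
    A * ((2*A*K)⁻¹ * (K * x)) = x/2 := by field_simp

lemma core (d : ℕ) (hd : 1 ≤ d) (p : ℝ) (hp : 0 < p)
    (μ : Measure (EuclideanSpace ℝ (Fin d))) [IsProbabilityMeasure μ]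
    {Ω : Type} [mΩ : MeasurableSpace Ω] (P : Measure Ω) [IsProbabilityMeasure P]
    (X : ℕ → Ω → EuclideanSpace ℝ (Fin d)) (hXm : ∀ k, Measurable (X k))
    (hind : iIndepFun X P) (hlaw : ∀ k, Measure.map (X k) P = μ)
    (N : ℕ) (hN : 1 ≤ N) (x : ℝ)
    (r : ℝ) (hr1 : (d:ℝ) ≤ r) (κ : ℝ) (hκ : 0 < κ) (w : ℝ) (hw : 0 < w)
    (L : ℕ) (hL1 : 1 ≤ L)
    (hchain : (2 ^ p - 1) / 2 * ∑ j ∈ Finset.range L, 2 ^ (-(p * ((j:ℝ)+1))) *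
        (κ * w * (2:ℝ) ^ ((r/2) * (((j:ℕ)+1:ℕ):ℝ))) + 2 ^ (-(p * (L:ℝ))) ≤ x) :
    P {ω | x ≤ DpCpt d p (empMeas d N fun k => X k ω) μ} ≤
      ENNReal.ofReal (3 * Real.exp (-((N:ℝ) * κ^2 * w^2 / 16))) := by
  set b : ℝ := (N:ℝ) * κ^2 * w^2 / 16 with hbdef
  by_cases hb : 1 ≤ b
  · have h := assemble d hd p hp μ P X hXm hind hlaw N hN x r b hr1 hb
      (fun ℓ => κ * w * (2:ℝ) ^ ((r/2) * (ℓ:ℝ))) (fun ℓ => by positivity) L hL1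
      hchain
      (fun ℓ => by rw [t_sq]; rw [hbdef]; ring)
    refine h.trans (ENNReal.ofReal_le_ofReal ?_)
    have := Real.exp_pos (-b)
    linarith
  · push_neg at hb
    calc P {ω | x ≤ DpCpt d p (empMeas d N fun k => X k ω) μ} ≤ P Set.univ :=
          measure_mono (Set.subset_univ _)
      _ = 1 := measure_univ
      _ ≤ ENNReal.ofReal (3 * Real.exp (-b)) := by
          rw [show (1:ℝ≥0∞) = ENNReal.ofReal 1 by simp]
          refine ENNReal.ofReal_le_ofReal ?_
          have h1 : Real.exp (-1) ≤ Real.exp (-b) := Real.exp_le_exp.2 (by linarith)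
          have h2 : (1:ℝ) ≤ 3 * Real.exp (-1) := by
            rw [Real.exp_neg]
            have h3 : Real.exp 1 ≤ 3 := by
              have := Real.exp_one_lt_d9
              linarith
            nlinarith [mul_inv_cancel₀ (ne_of_gt (Real.exp_pos 1)),
              inv_pos.2 (Real.exp_pos 1)]
          nlinarith [Real.exp_pos (-b), Real.exp_pos (-1)]

lemma case_sup (d : ℕ) (hd : 1 ≤ d) (p : ℝ) (hp : 0 < p) (hpd : (d:ℝ)/2 < p) :
    ∃ c : ℝ, 0 < c ∧
      ∀ (μ : Measure (EuclideanSpace ℝ (Fin d))), IsProbabilityMeasure μ →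
      ∀ (Ω : Type) (mΩ : MeasurableSpace Ω) (P : Measure Ω), IsProbabilityMeasure P →
      ∀ X : ℕ → Ω → EuclideanSpace ℝ (Fin d), (∀ k, Measurable (X k)) →
        iIndepFun X P → (∀ k, Measure.map (X k) P = μ) →
      ∀ N : ℕ, 1 ≤ N → ∀ x : ℝ, 0 < x → x ≤ 1 →
        P {ω | x ≤ DpCpt d p (empMeas d N fun k => X k ω) μ} ≤
          ENNReal.ofReal (3 * Real.exp (-(c * N * x ^ 2))) := by
  have hd0 : (0:ℝ) ≤ (d:ℝ) := Nat.cast_nonneg d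
  have hA : (0:ℝ) < (2 ^ p - 1) / 2 := by
    have : (1:ℝ) < 2 ^ p := Real.one_lt_rpow_iff_of_pos two_pos |>.2 (Or.inl ⟨one_lt_two, hp⟩)
    linarith
  set q : ℝ := (p + (d:ℝ)/2)/2 with hq
  have hqp : q - p < 0 := by rw [hq]; linarith
  set u : ℝ := (2:ℝ)^(q-p) with hu
  have hu0 : 0 < u := Real.rpow_pos_of_pos two_pos _
  have hu1 : u < 1 := Real.rpow_lt_one_of_one_lt_of_neg one_lt_two hqp
  set s1 : ℝ := u*(1-u)⁻¹ with hs1def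
  have hs1 : 0 < s1 := by
    have h1u : 0 < 1 - u := by linarith
    rw [hs1def]; positivity
  set κ : ℝ := (2*((2 ^ p - 1) / 2)*s1)⁻¹ with hκdef
  have hκ : 0 < κ := by rw [hκdef]; positivity
  refine ⟨κ^2/16, by positivity, ?_⟩
  intro μ hμ Ω mΩ P hP X hXm hind hlaw N hN x hx0 hx1
  obtain ⟨L, hL1, hLx, hLup, _⟩ := exists_L p x hp hx0 hx1
  have hr1 : (d:ℝ) ≤ 2*q := by rw [hq]; linarith
  have hchain : (2 ^ p - 1) / 2 * ∑ j ∈ Finset.range L, 2 ^ (-(p * ((j:ℝ)+1))) *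
      (κ * x * (2:ℝ) ^ (((2*q)/2) * (((j:ℕ)+1:ℕ):ℝ))) + 2 ^ (-(p * (L:ℝ))) ≤ x := by
    have hq2 : (2*q)/2 = q := by ring
    rw [hq2, sum_cast_conv, chain_term]
    have hgeom : ∑ j ∈ Finset.range L, ((2:ℝ)^(q-p))^(j+1) ≤ s1 := by
      rw [hs1def, hu]; exact geom_le_tsum _ hu0.le hu1 L
    have h1 : (2 ^ p - 1) / 2 * (κ * x * ∑ j ∈ Finset.range L, ((2:ℝ)^(q-p))^(j+1))
        ≤ (2 ^ p - 1) / 2 * (κ * x * s1) := by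
      refine mul_le_mul_of_nonneg_left ?_ hA.le
      exact mul_le_mul_of_nonneg_left hgeom (by positivity)
    have h2 : (2 ^ p - 1) / 2 * (κ * x * s1) = x/2 := by
      rw [hκdef]
      exact inv_half _ _ _ (ne_of_gt hA) (ne_of_gt hs1)
    linarith
  have hcore := core d hd p hp μ P X hXm hind hlaw N hN x (2*q) hr1 κ hκ x hx0 L hL1 hchain
  refine hcore.trans (le_of_eq ?_)
  congr 1
  congr 1
  push_cast
  ring

lemma case_crit (d : ℕ) (hd : 1 ≤ d) (p : ℝ) (hp : 0 < p) (hpd : p = (d:ℝ)/2) :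
    ∃ c : ℝ, 0 < c ∧
      ∀ (μ : Measure (EuclideanSpace ℝ (Fin d))), IsProbabilityMeasure μ →
      ∀ (Ω : Type) (mΩ : MeasurableSpace Ω) (P : Measure Ω), IsProbabilityMeasure P →
      ∀ X : ℕ → Ω → EuclideanSpace ℝ (Fin d), (∀ k, Measurable (X k)) →
        iIndepFun X P → (∀ k, Measure.map (X k) P = μ) →
      ∀ N : ℕ, 1 ≤ N → ∀ x : ℝ, 0 < x → x ≤ 1 →
        P {ω | x ≤ DpCpt d p (empMeas d N fun k => X k ω) μ} ≤
          ENNReal.ofReal (3 * Real.exp (-(c * N * (x / Real.log (2 + 1/x)) ^ 2))) := by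
  have hA : (0:ℝ) < (2 ^ p - 1) / 2 := by
    have : (1:ℝ) < 2 ^ p := Real.one_lt_rpow_iff_of_pos two_pos |>.2 (Or.inl ⟨one_lt_two, hp⟩)
    linarith
  have hlog2 : 0 < Real.log 2 := Real.log_pos one_lt_two
  set cL : ℝ := 1/Real.log 2 + 2/(p*Real.log 2) with hcL
  have hcL0 : 0 < cL := by rw [hcL]; positivity
  set κ : ℝ := (2*((2 ^ p - 1) / 2)*cL)⁻¹ with hκdef
  have hκ : 0 < κ := by rw [hκdef]; positivity
  refine ⟨κ^2/16, by positivity, ?_⟩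
  intro μ hμ Ω mΩ P hP X hXm hind hlaw N hN x hx0 hx1
  have hix : 0 < 1/x := by positivity
  have hlogx : 0 < Real.log (2 + 1/x) := Real.log_pos (by linarith)
  set w : ℝ := x / Real.log (2 + 1/x) with hwdef
  have hw : 0 < w := by rw [hwdef]; positivity
  obtain ⟨L, hL1, hLx, _, hLlog⟩ := exists_L p x hp hx0 hx1
  have hr1 : (d:ℝ) ≤ 2*p := by rw [hpd]; linarith
  have hLbound : (L:ℝ) ≤ cL * Real.log (2 + 1/x) := by
    have h1 : Real.log 2 ≤ Real.log (2 + 1/x) := Real.log_le_log two_pos (by linarith)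
    have h2 : Real.log (2/x) ≤ 2 * Real.log (2 + 1/x) := by
      have hsq : 2/x ≤ (2 + 1/x)^2 := by
        have h2x : 2/x = 2 * (1/x) := by ring
        rw [h2x]
        nlinarith [sq_nonneg (1/x)]
      calc Real.log (2/x) ≤ Real.log ((2 + 1/x)^2) := Real.log_le_log (by positivity) hsq
        _ = 2 * Real.log (2 + 1/x) := by
            rw [Real.log_pow]; push_cast; ring
    have h3 : (L:ℝ) ≤ 1 + Real.log (2/x) / (p * Real.log 2) := hLlog
    have h4 : (1:ℝ) ≤ Real.log (2 + 1/x) / Real.log 2 := by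
      rw [le_div_iff₀ hlog2]; linarith
    calc (L:ℝ) ≤ 1 + Real.log (2/x) / (p * Real.log 2) := h3
      _ ≤ Real.log (2 + 1/x) / Real.log 2 + (2 * Real.log (2 + 1/x)) / (p * Real.log 2) := by
          refine add_le_add h4 ?_
          refine div_le_div_of_nonneg_right h2 (by positivity) |>.trans (le_refl _)
      _ = cL * Real.log (2 + 1/x) := by rw [hcL]; field_simp
  have hchain : (2 ^ p - 1) / 2 * ∑ j ∈ Finset.range L, 2 ^ (-(p * ((j:ℝ)+1))) *
      (κ * w * (2:ℝ) ^ (((2*p)/2) * (((j:ℕ)+1:ℕ):ℝ))) + 2 ^ (-(p * (L:ℝ))) ≤ x := by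
    have hq2 : (2*p)/2 = p := by ring
    rw [hq2, sum_cast_conv, chain_term]
    have hone : ∑ j ∈ Finset.range L, ((2:ℝ)^(p-p))^(j+1) = (L:ℝ) := by
      simp [sub_self, Real.rpow_zero]
    rw [hone]
    have h1 : (2 ^ p - 1) / 2 * (κ * w * (L:ℝ))
        ≤ (2 ^ p - 1) / 2 * (κ * w * (cL * Real.log (2 + 1/x))) := by
      refine mul_le_mul_of_nonneg_left ?_ hA.le
      exact mul_le_mul_of_nonneg_left hLbound (by positivity)
    have h2 : (2 ^ p - 1) / 2 * (κ * w * (cL * Real.log (2 + 1/x))) = x/2 := by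
      rw [hκdef, hwdef]
      exact inv_half2 _ _ _ _ (ne_of_gt hA) (ne_of_gt hcL0) (ne_of_gt hlogx)
    linarith
  have hcore := core d hd p hp μ P X hXm hind hlaw N hN x (2*p) hr1 κ hκ w hw L hL1 hchain
  refine hcore.trans (le_of_eq ?_)
  congr 1
  congr 1
  rw [hwdef]
  push_cast
  ring

lemma case_sub (d : ℕ) (hd : 1 ≤ d) (p : ℝ) (hp : 0 < p) (hpd : p < (d:ℝ)/2) :
    ∃ c : ℝ, 0 < c ∧
      ∀ (μ : Measure (EuclideanSpace ℝ (Fin d))), IsProbabilityMeasure μ →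
      ∀ (Ω : Type) (mΩ : MeasurableSpace Ω) (P : Measure Ω), IsProbabilityMeasure P →
      ∀ X : ℕ → Ω → EuclideanSpace ℝ (Fin d), (∀ k, Measurable (X k)) →
        iIndepFun X P → (∀ k, Measure.map (X k) P = μ) →
      ∀ N : ℕ, 1 ≤ N → ∀ x : ℝ, 0 < x → x ≤ 1 →
        P {ω | x ≤ DpCpt d p (empMeas d N fun k => X k ω) μ} ≤
          ENNReal.ofReal (3 * Real.exp (-(c * N * x ^ ((d:ℝ)/p)))) := by
  have hA : (0:ℝ) < (2 ^ p - 1) / 2 := by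
    have : (1:ℝ) < 2 ^ p := Real.one_lt_rpow_iff_of_pos two_pos |>.2 (Or.inl ⟨one_lt_two, hp⟩)
    linarith
  set q : ℝ := (d:ℝ)/2 with hq
  have hqp : 0 < q - p := by rw [hq]; linarith
  set u : ℝ := (2:ℝ)^(q-p) with hu
  have hu0 : 0 < u := Real.rpow_pos_of_pos two_pos _
  have hu1 : 1 < u := Real.one_lt_rpow_iff_of_pos two_pos |>.2 (Or.inl ⟨one_lt_two, hqp⟩)
  set e : ℝ := (q-p)/p with he
  have he0 : 0 < e := by rw [he]; positivity
  set K : ℝ := u*(u-1)⁻¹*((2:ℝ)^(p+1))^e with hK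
  have hK0 : 0 < K := by
    rw [hK]
    have : (0:ℝ) < u - 1 := by linarith
    positivity
  set κ : ℝ := (2*((2 ^ p - 1) / 2)*K)⁻¹ with hκdef
  have hκ : 0 < κ := by rw [hκdef]; positivity
  refine ⟨κ^2/16, by positivity, ?_⟩
  intro μ hμ Ω mΩ P hP X hXm hind hlaw N hN x hx0 hx1
  set w : ℝ := x ^ ((d:ℝ)/(2*p)) with hwdef
  have hw : 0 < w := Real.rpow_pos_of_pos hx0 _
  obtain ⟨L, hL1, hLx, hLup, _⟩ := exists_L p x hp hx0 hx1
  have hr1 : (d:ℝ) ≤ 2*q := by rw [hq]; linarith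
  have hkey : u^L * w ≤ ((2:ℝ)^(p+1))^e * x := by
    have h1 : u^L = (2:ℝ)^((q-p)*(L:ℝ)) := by rw [hu, rpow_pow]
    have h2 : (2:ℝ)^((q-p)*(L:ℝ)) = ((2:ℝ)^(p*(L:ℝ)))^e := by
      rw [← Real.rpow_mul (by norm_num : (0:ℝ) ≤ 2)]
      congr 1
      rw [he]
      field_simp
    have h3 : ((2:ℝ)^(p*(L:ℝ)))^e ≤ ((2:ℝ)^(p+1)/x)^e :=
      Real.rpow_le_rpow (Real.rpow_nonneg (by norm_num) _) hLup he0.le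
    have h4 : ((2:ℝ)^(p+1)/x)^e = ((2:ℝ)^(p+1))^e / x^e :=
      Real.div_rpow (Real.rpow_nonneg (by norm_num) _) hx0.le e
    have h5 : u^L ≤ ((2:ℝ)^(p+1))^e / x^e := by
      rw [h1, h2]; rw [h4] at h3; exact h3
    have h6 : u^L * w ≤ (((2:ℝ)^(p+1))^e / x^e) * w :=
      mul_le_mul_of_nonneg_right h5 hw.le
    have h7 : (((2:ℝ)^(p+1))^e / x^e) * w = ((2:ℝ)^(p+1))^e * x := by
      rw [hwdef]
      have hxe : x ^ ((d:ℝ)/(2*p)) / x^e = x := by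
        rw [← Real.rpow_sub hx0]
        rw [show (d:ℝ)/(2*p) - e = 1 by rw [he, hq]; field_simp; ring]
        exact Real.rpow_one x
      calc (((2:ℝ)^(p+1))^e / x^e) * x ^ ((d:ℝ)/(2*p))
          = ((2:ℝ)^(p+1))^e * (x ^ ((d:ℝ)/(2*p)) / x^e) := by ring
        _ = ((2:ℝ)^(p+1))^e * x := by rw [hxe]
    rw [h7] at h6
    exact h6
  have hchain : (2 ^ p - 1) / 2 * ∑ j ∈ Finset.range L, 2 ^ (-(p * ((j:ℝ)+1))) *
      (κ * w * (2:ℝ) ^ (((2*q)/2) * (((j:ℕ)+1:ℕ):ℝ))) + 2 ^ (-(p * (L:ℝ))) ≤ x := by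
    have hq2 : (2*q)/2 = q := by ring
    rw [hq2, sum_cast_conv, chain_term]
    have hgeom : ∑ j ∈ Finset.range L, ((2:ℝ)^(q-p))^(j+1) ≤ u^(L+1)*(u-1)⁻¹ := by
      rw [hu]; exact geom_le_big _ hu1 L
    have hbig : κ * w * (u^(L+1)*(u-1)⁻¹) ≤ κ * (K * x) := by
      have h8 : w * (u^(L+1)*(u-1)⁻¹) ≤ K * x := by
        have h9 : u^(L+1) = u * u^L := by ring
        have h10 : w * (u^(L+1)*(u-1)⁻¹) = (u*(u-1)⁻¹) * (u^L * w) := by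
          rw [h9]; ring
        rw [h10, hK]
        have h11 : (0:ℝ) < u - 1 := by linarith
        calc (u*(u-1)⁻¹) * (u^L * w) ≤ (u*(u-1)⁻¹) * (((2:ℝ)^(p+1))^e * x) := by
              refine mul_le_mul_of_nonneg_left hkey (by positivity)
          _ = u*(u-1)⁻¹*((2:ℝ)^(p+1))^e * x := by ring
      calc κ * w * (u^(L+1)*(u-1)⁻¹) = κ * (w * (u^(L+1)*(u-1)⁻¹)) := by ring
        _ ≤ κ * (K * x) := mul_le_mul_of_nonneg_left h8 hκ.le
    have h1 : (2 ^ p - 1) / 2 * (κ * w * ∑ j ∈ Finset.range L, ((2:ℝ)^(q-p))^(j+1))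
        ≤ (2 ^ p - 1) / 2 * (κ * (K * x)) := by
      refine mul_le_mul_of_nonneg_left ?_ hA.le
      refine le_trans ?_ hbig
      exact mul_le_mul_of_nonneg_left hgeom (by positivity)
    have h2 : (2 ^ p - 1) / 2 * (κ * (K * x)) = x/2 := by
      rw [hκdef]
      exact inv_half3 _ _ _ (ne_of_gt hA) (ne_of_gt hK0)
    linarith
  have hcore := core d hd p hp μ P X hXm hind hlaw N hN x (2*q) hr1 κ hκ w hw L hL1 hchain
  refine hcore.trans (le_of_eq ?_)
  congr 1
  congr 1
  rw [hwdef]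
  have hw2 : (x ^ ((d:ℝ)/(2*p)))^2 = x ^ ((d:ℝ)/p) := by
    rw [← Real.rpow_natCast (x ^ ((d:ℝ)/(2*p))) 2, ← Real.rpow_mul hx0.le]
    congr 1
    field_simp
    ring
  rw [hw2]
  push_cast
  ring

lemma dpcpt_le_one (d : ℕ) (p : ℝ) (hp : 0 < p)
    (μ ν : Measure (EuclideanSpace ℝ (Fin d))) [IsProbabilityMeasure μ]
    [IsProbabilityMeasure ν] : DpCpt d p μ ν ≤ 1 := by
  have h := dpcpt_le_chain d p hp μ ν 0
  simpa using h

/-- Proposition 10 of Fournier-Guillin: concentration of `D_p(μ_N, μ)` for a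
probability measure supported in `(-1,1]^d`. -/
theorem compact_Dp_concentration (d : ℕ) (hd : 1 ≤ d) (p : ℝ) (hp : 0 < p) :
    ∃ C c : ℝ, 0 < C ∧ 0 < c ∧
      ∀ μ : Measure (EuclideanSpace ℝ (Fin d)), IsProbabilityMeasure μ →
        μ (Bset d 0) = 1 →
      ∀ (Ω : Type) (_ : MeasurableSpace Ω) (P : Measure Ω), IsProbabilityMeasure P →
      ∀ X : ℕ → Ω → EuclideanSpace ℝ (Fin d),
        (∀ k, Measurable (X k)) →
        iIndepFun X P →
        (∀ k, Measure.map (X k) P = μ) →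
      ∀ N : ℕ, 1 ≤ N → ∀ x : ℝ, 0 < x →
        (((d : ℝ) / 2 < p →
          P {ω | x ≤ DpCpt d p (empMeas d N fun k => X k ω) μ} ≤
            ENNReal.ofReal (if x ≤ 1 then C * Real.exp (-(c * N * x ^ 2)) else 0)) ∧
        (p = (d : ℝ) / 2 →
          P {ω | x ≤ DpCpt d p (empMeas d N fun k => X k ω) μ} ≤
            ENNReal.ofReal (if x ≤ 1 then
              C * Real.exp (-(c * N * (x / Real.log (2 + 1 / x)) ^ 2)) else 0)) ∧
        (0 < p ∧ p < (d : ℝ) / 2 →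
          P {ω | x ≤ DpCpt d p (empMeas d N fun k => X k ω) μ} ≤
            ENNReal.ofReal (if x ≤ 1 then
              C * Real.exp (-(c * N * x ^ ((d : ℝ) / p))) else 0))) := by
  have hempty : ∀ (μ : Measure (EuclideanSpace ℝ (Fin d))), IsProbabilityMeasure μ →
      ∀ (Ω : Type) (mΩ : MeasurableSpace Ω) (P : Measure Ω), IsProbabilityMeasure P →
      ∀ (X : ℕ → Ω → EuclideanSpace ℝ (Fin d)) (N : ℕ), 1 ≤ N → ∀ x : ℝ, ¬ x ≤ 1 →
      P {ω | x ≤ DpCpt d p (empMeas d N fun k => X k ω) μ} = 0 := by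
    intro μ hμ Ω mΩ P hP X N hN x hx1
    have hset : {ω | x ≤ DpCpt d p (empMeas d N fun k => X k ω) μ} = ∅ := by
      ext ω
      simp only [Set.mem_setOf_eq, Set.mem_empty_iff_false, iff_false, not_le]
      haveI := empMeas_prob d N (by omega) (fun k => X k ω)
      have h1 := dpcpt_le_one d p hp (empMeas d N fun k => X k ω) μ
      push_neg at hx1
      linarith
    rw [hset]
    simp
  rcases lt_trichotomy p ((d:ℝ)/2) with hcase | hcase | hcase
  · obtain ⟨c, hc, hbound⟩ := case_sub d hd p hp hcase
    refine ⟨3, c, by norm_num, hc, ?_⟩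
    intro μ hμ hsupp Ω mΩ P hP X hXm hind hlaw N hN x hx0
    refine ⟨fun hyp => absurd hyp (by linarith), fun hyp => absurd hyp (by linarith), ?_⟩
    intro _
    by_cases hx1 : x ≤ 1
    · rw [if_pos hx1]
      exact hbound μ hμ Ω mΩ P hP X hXm hind hlaw N hN x hx0 hx1
    · rw [if_neg hx1, hempty μ hμ Ω mΩ P hP X N hN x hx1]
      simp
  · obtain ⟨c, hc, hbound⟩ := case_crit d hd p hp hcase
    refine ⟨3, c, by norm_num, hc, ?_⟩
    intro μ hμ hsupp Ω mΩ P hP X hXm hind hlaw N hN x hx0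
    refine ⟨fun hyp => absurd hyp (by linarith), ?_, fun hyp => absurd hyp.2 (by linarith)⟩
    intro _
    by_cases hx1 : x ≤ 1
    · rw [if_pos hx1]
      exact hbound μ hμ Ω mΩ P hP X hXm hind hlaw N hN x hx0 hx1
    · rw [if_neg hx1, hempty μ hμ Ω mΩ P hP X N hN x hx1]
      simp
  · obtain ⟨c, hc, hbound⟩ := case_sup d hd p hp hcase
    refine ⟨3, c, by norm_num, hc, ?_⟩
    intro μ hμ hsupp Ω mΩ P hP X hXm hind hlaw N hN x hx0
    refine ⟨?_, fun hyp => absurd hyp (by linarith), fun hyp => absurd hyp.2 (by linarith)⟩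
    intro _
    by_cases hx1 : x ≤ 1
    · rw [if_pos hx1]
      exact hbound μ hμ Ω mΩ P hP X hXm hind hlaw N hN x hx0 hx1
    · rw [if_neg hx1, hempty μ hμ Ω mΩ P hP X N hN x hx1]
      simp

end
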